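/- Lemma (unique bounded representation; delta-omega-lemma assertion (1) together with the representation claim used in the proof of Theorem 4.3): let k ≥ 0 and ω₀, ω₁, …, ω_k ∈ ℤ with ω₀ > 0, and for 1 ≤ j ≤ k let p_j be the least positive integer α such that α·ω_j ∈ ℤω₀ + ℤω₁ + ⋯ + ℤω_{j−1}. Then for every ω̃ ∈ ℤω₀ + ℤω₁ + ⋯ + ℤω_k there exist a unique integer β₀ and unique integers β₁, …, β_k with 0 ≤ β_j < p_j for every 1 ≤ j ≤ k such that ω̃ = β₀ω₀ + β₁ω₁ + ⋯ + β_kω_k. -/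

import Mathlib

private theorem aux_rep (k : ℕ) (ω : ℕ → ℤ) (hω0 : 0 < ω 0) (A : ℕ → ℤ)
    (hA : ∀ j, 1 ≤ j → j ≤ k →
      IsLeast {α : ℤ | 0 < α ∧ ∃ β : ℕ → ℤ,
        α * ω j = ∑ i ∈ Finset.range j, β i * ω i} (A j)) :
    ∀ m : ℤ, (∃ γ : ℕ → ℤ, m = ∑ i ∈ Finset.range (k + 1), γ i * ω i) →
      ∃ β : ℕ → ℤ, (∀ j, 1 ≤ j → j ≤ k → 0 ≤ β j ∧ β j < A j) ∧
        m = ∑ i ∈ Finset.range (k + 1), β i * ω i ∧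
        ∀ β' : ℕ → ℤ, (∀ j, 1 ≤ j → j ≤ k → 0 ≤ β' j ∧ β' j < A j) →
          m = ∑ i ∈ Finset.range (k + 1), β' i * ω i →
          ∀ j ≤ k, β' j = β j := by
  induction k with
  | zero =>
    rintro m ⟨γ, hγ⟩
    simp only [Finset.sum_range_succ, Finset.sum_range_zero, zero_add] at hγ
    refine ⟨γ, by omega, ?_, ?_⟩
    · rw [Finset.sum_range_succ, Finset.sum_range_zero, zero_add]; exact hγ
    · intro β' _ hβ' j hj
      interval_cases j
      simp only [Finset.sum_range_succ, Finset.sum_range_zero, zero_add] at hβ'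
      exact mul_right_cancel₀ (ne_of_gt hω0) (hβ'.symm.trans hγ)
  | succ k ih =>
    have hA' : ∀ j, 1 ≤ j → j ≤ k →
        IsLeast {α : ℤ | 0 < α ∧ ∃ β : ℕ → ℤ,
          α * ω j = ∑ i ∈ Finset.range j, β i * ω i} (A j) :=
      fun j h1 h2 => hA j h1 (by omega)
    obtain ⟨⟨hapos, βA, hβA⟩, halb⟩ := hA (k + 1) (by omega) le_rfl
    rintro m ⟨γ, hγ⟩
    set a := A (k + 1) with ha
    set r := γ (k + 1) % a with hrdef
    set q := γ (k + 1) / a with hqdef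
    have hge : a * q + r = γ (k + 1) := Int.mul_ediv_add_emod _ a
    have hr0 : 0 ≤ r := Int.emod_nonneg _ (ne_of_gt hapos)
    have hra : r < a := Int.emod_lt_of_pos _ hapos
    have hm' : m - r * ω (k + 1) = ∑ i ∈ Finset.range (k + 1), (γ i + q * βA i) * ω i := by
      have h1 : ∑ i ∈ Finset.range (k + 1), (γ i + q * βA i) * ω i
          = ∑ i ∈ Finset.range (k + 1), γ i * ω i + q * (a * ω (k + 1)) := by
        rw [hβA, Finset.mul_sum, ← Finset.sum_add_distrib]
        exact Finset.sum_congr rfl fun i _ => by ring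
      rw [h1, hγ, Finset.sum_range_succ, ← hge]
      ring
    obtain ⟨β, hβbd, hβsum, hβuniq⟩ := ih hA' (m - r * ω (k + 1)) ⟨_, hm'⟩
    set βfull : ℕ → ℤ := fun i => if i = k + 1 then r else β i with hβfull
    have hsub : ∑ i ∈ Finset.range (k + 1), βfull i * ω i
        = ∑ i ∈ Finset.range (k + 1), β i * ω i :=
      Finset.sum_congr rfl fun i hi => by
        simp only [Finset.mem_range] at hi
        simp [hβfull, Nat.ne_of_lt hi]
    refine ⟨βfull, ?_, ?_, ?_⟩
    · intro j h1 h2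
      by_cases hj : j = k + 1
      · subst hj; simp [hβfull, hr0, hra]; exact hra
      · have : j ≤ k := by omega
        simpa [hβfull, hj] using hβbd j h1 this
    · rw [Finset.sum_range_succ, hsub]
      simp only [hβfull, if_pos rfl]
      linarith [hβsum]
    · intro β' hbd' hsum' j hj
      obtain ⟨hr'0, hr'a⟩ := hbd' (k + 1) (by omega) le_rfl
      set r' := β' (k + 1) with hr'def
      have hsum'' : m = ∑ i ∈ Finset.range (k + 1), β' i * ω i + r' * ω (k + 1) := by
        rw [hsum', Finset.sum_range_succ]
      have key : (r' - r) * ω (k + 1) = ∑ i ∈ Finset.range (k + 1), (β i - β' i) * ω i := by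
        have e : ∑ i ∈ Finset.range (k + 1), (β i - β' i) * ω i
            = ∑ i ∈ Finset.range (k + 1), β i * ω i -
              ∑ i ∈ Finset.range (k + 1), β' i * ω i := by
          rw [← Finset.sum_sub_distrib]
          exact Finset.sum_congr rfl fun i _ => by ring
        rw [e, ← hβsum]
        linarith [hsum'']
      have key2 : (r - r') * ω (k + 1) = ∑ i ∈ Finset.range (k + 1), (β' i - β i) * ω i := by
        have e : ∑ i ∈ Finset.range (k + 1), (β' i - β i) * ω i
            = ∑ i ∈ Finset.range (k + 1), β' i * ω i -
              ∑ i ∈ Finset.range (k + 1), β i * ω i := by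
          rw [← Finset.sum_sub_distrib]
          exact Finset.sum_congr rfl fun i _ => by ring
        rw [e, ← hβsum]
        linarith [hsum'']
      have hrr : r' = r := by
        by_contra hne
        rcases lt_or_gt_of_ne hne with hlt | hgt
        · have : a ≤ r - r' := halb ⟨by omega, fun i => β' i - β i, key2⟩
          omega
        · have : a ≤ r' - r := halb ⟨by omega, fun i => β i - β' i, key⟩
          omega
      have hm'' : m - r * ω (k + 1) = ∑ i ∈ Finset.range (k + 1), β' i * ω i := by
        rw [hsum'']; rw [hrr]; ring
      have hrest := hβuniq β' (fun j h1 h2 => hbd' j h1 (by omega)) hm''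
      by_cases hjk : j = k + 1
      · subst hjk; simp [hβfull, ← hr'def, hrr]
      · have : j ≤ k := by omega
        simpa [hβfull, hjk] using hrest j this

/-- Lemma `delta-omega-lemma`, assertion (1) together with the unique bounded representation
claim: let `ω₀, …, ω_k` be integers with `ω₀ > 0`, and for `1 ≤ j ≤ k` let `A j` be the
least positive integer `α` with `α·ω_j ∈ ℤω₀ + ⋯ + ℤω_{j-1}`. Then every element `m` of
`ℤω₀ + ⋯ + ℤω_k` has a unique representation `m = β₀ω₀ + β₁ω₁ + ⋯ + β_kω_k` with `β₀ ∈ ℤ`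
and `0 ≤ β_j < A j` for `1 ≤ j ≤ k`. -/
theorem unique_bounded_representation (k : ℕ) (ω : ℕ → ℤ) (hω0 : 0 < ω 0)
    (A : ℕ → ℤ)
    (hA : ∀ j, 1 ≤ j → j ≤ k →
      IsLeast {α : ℤ | 0 < α ∧ ∃ β : ℕ → ℤ,
        α * ω j = ∑ i ∈ Finset.range j, β i * ω i} (A j)) :
    ∀ m : ℤ, (∃ γ : ℕ → ℤ, m = ∑ i ∈ Finset.range (k + 1), γ i * ω i) →
      ∃! β : Fin (k + 1) → ℤ,
        (∀ j : Fin (k + 1), 1 ≤ j.1 → 0 ≤ β j ∧ β j < A j.1) ∧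
        m = ∑ j : Fin (k + 1), β j * ω j.1 := by
  intro m hm
  obtain ⟨β, hbd, hsum, huniq⟩ := aux_rep k ω hω0 A hA m hm
  refine ⟨fun j => β j.1, ⟨fun j h1 => hbd j.1 h1 (by omega), ?_⟩, ?_⟩
  · rw [hsum, ← Fin.sum_univ_eq_sum_range (fun i => β i * ω i)]
  · rintro y ⟨hybd, hysum⟩
    set yN : ℕ → ℤ := fun i => if h : i < k + 1 then y ⟨i, h⟩ else 0 with hyN
    have hy : m = ∑ i ∈ Finset.range (k + 1), yN i * ω i := by
      rw [hysum, ← Fin.sum_univ_eq_sum_range (fun i => yN i * ω i)]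
      exact Finset.sum_congr rfl fun i _ => by simp [hyN, i.isLt, i.is_le]
    have hcond : ∀ j, 1 ≤ j → j ≤ k → 0 ≤ yN j ∧ yN j < A j := by
      intro j h1 h2
      have hj : j < k + 1 := by omega
      simpa [hyN, hj, h2] using hybd ⟨j, hj⟩ h1
    have := huniq yN hcond hy
    funext j
    have hj : j.1 ≤ k := by omega
    have := this j.1 hj
    simpa [hyN, j.isLt, hj] using this
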